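/- Let q₀ ∈ L¹(ℝ) ∩ L²(ℝ), let Z : [0,∞) → (0,∞) be continuous with Z(0) = 1, and set h(t) = (1/2)∫₀ᵗ Z(s) ds. For each y ∈ ℝ let t*_y = inf{ t ≥ 0 : 1 + q₀(y) h(t) ≤ 0 } (∞ if the set is empty), and define the dissipative Lagrangian solution Q^d(t,y) = Z(t)/(1/q₀(y) + h(t)) when q₀(y) ≠ 0 and t < t*_y, and Q^d(t,y) = 0 otherwise. Then the Oleinik-type one-sided bound Q^d(t,y) ≤ Z(t) / ( (1/2)∫₀ᵗ Z(s) ds ) holds for every t > 0 and every y ∈ ℝ. -/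

import Mathlib

open MeasureTheory Real Set
open scoped ENNReal

/-- Oleinik-type one-sided bound for the dissipative solution along
characteristics: `Q^d(t,y) ≤ Z(t) / ((1/2)∫₀ᵗ Z(s) ds)` for all `t > 0` and all `y`. -/
theorem dissipative_oleinik_bound
    (q₀ : ℝ → ℝ) (hq₀L1 : Integrable q₀ (volume : Measure ℝ))
    (hq₀L2 : MemLp q₀ 2 (volume : Measure ℝ))
    (Z : ℝ → ℝ) (hZpos : ∀ t : ℝ, 0 ≤ t → 0 < Z t)
    (hZcont : ContinuousOn Z (Set.Ici (0:ℝ))) (hZ0 : Z 0 = 1)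
    (h : ℝ → ℝ) (hh : ∀ t, h t = (1/2) * ∫ s in (0:ℝ)..t, Z s)
    (tstar : ℝ → ℝ≥0∞)
    (htstar : ∀ y, tstar y =
      sInf (ENNReal.ofReal '' {t : ℝ | 0 ≤ t ∧ 1 + q₀ y * h t ≤ 0}))
    (Qd : ℝ → ℝ → ℝ)
    (hQd : ∀ t y, 0 ≤ t → q₀ y ≠ 0 → ENNReal.ofReal t < tstar y →
      Qd t y = Z t / (1 / q₀ y + h t))
    (hQdzero : ∀ t y, 0 ≤ t → (q₀ y = 0 ∨ ¬ ENNReal.ofReal t < tstar y) →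
      Qd t y = 0) :
    ∀ t : ℝ, 0 < t → ∀ y : ℝ,
      Qd t y ≤ Z t / ((1/2) * ∫ s in (0:ℝ)..t, Z s) := by
  intro t ht y
  have hsub : Set.uIcc (0:ℝ) t ⊆ Set.Ici (0:ℝ) := by
    rw [Set.uIcc_of_le ht.le]
    exact fun x hx => hx.1
  have hint : IntervalIntegrable Z volume 0 t :=
    (hZcont.mono hsub).intervalIntegrable
  have hIpos : 0 < ∫ s in (0:ℝ)..t, Z s :=
    intervalIntegral.intervalIntegral_pos_of_pos_on hint
      (fun x hx => hZpos x hx.1.le) ht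
  have hhpos : 0 < h t := by rw [hh]; positivity
  have hZt : 0 < Z t := hZpos t ht.le
  have hRHS : 0 ≤ Z t / ((1/2) * ∫ s in (0:ℝ)..t, Z s) := by positivity
  by_cases hcase : q₀ y = 0 ∨ ¬ ENNReal.ofReal t < tstar y
  · rw [hQdzero t y ht.le hcase]; exact hRHS
  · push_neg at hcase
    obtain ⟨hq, hlt⟩ := hcase
    rw [hQd t y ht.le hq hlt]
    have hpos : 0 < 1 + q₀ y * h t := by
      by_contra hle
      push_neg at hle
      have hmem : ENNReal.ofReal t ∈
          ENNReal.ofReal '' {s : ℝ | 0 ≤ s ∧ 1 + q₀ y * h s ≤ 0} :=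
        ⟨t, ⟨ht.le, hle⟩, rfl⟩
      exact absurd (htstar y ▸ sInf_le hmem) (not_le.mpr hlt)
    rcases lt_or_gt_of_ne hq with hneg | hposq
    · -- q₀ y < 0 : denominator negative, Qd ≤ 0
      have hden : 1 / q₀ y + h t < 0 := by
        have : 1 / q₀ y + h t = (1 + q₀ y * h t) / q₀ y := by
          field_simp
        rw [this]
        exact div_neg_of_pos_of_neg hpos hneg
      have : Z t / (1 / q₀ y + h t) ≤ 0 :=
        (div_neg_of_pos_of_neg hZt hden).le
      linarith [hRHS]
    · -- q₀ y > 0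
      have hq1 : 0 < 1 / q₀ y := by positivity
      have hden : h t ≤ 1 / q₀ y + h t := by linarith
      calc Z t / (1 / q₀ y + h t) ≤ Z t / h t := by gcongr
        _ = Z t / ((1/2) * ∫ s in (0:ℝ)..t, Z s) := by rw [hh]
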